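/- Let $x : \mathbb{R} \to \mathbb{R}^N$ be differentiable and satisfy $\dot{x}(t) = S(x(t))\nabla H(x(t)) - D(t)x(t)$, where for every $y$ the matrix $S(y)$ is skew-symmetric and $H$ is continuously differentiable. Let $I : \mathbb{R}^N \to \mathbb{R}$ be continuously differentiable with $\nabla I(y)^T S(y)\nabla H(y) = 0$ and $\nabla I(y)^T D(t)y = \eta(t) I(y)$ for all $y$ and $t$, where $\eta : \mathbb{R} \to \mathbb{R}$ is continuous. Then for all $t \ge 0$, $I(x(t)) = e^{-\phi(t)} I(x(0))$ where $\phi(t) = \int_0^t \eta(s)\,ds$; in particular the invariant dissipates at the exponential rate $e^{-\int_0^t \eta(s)ds}$. -/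

import Mathlib

open Matrix MeasureTheory

/-- For a differentiable solution `x` of the damped Hamiltonian system
`ẋ = S(x)∇H(x) - D(t)x`, a continuously differentiable conformal invariant `I`
(satisfying `∇I(y)ᵀ S(y) ∇H(y) = 0` and `∇I(y)ᵀ D(t) y = η(t) I(y)` with `η` continuous)
dissipates exponentially: `I(x(t)) = e^{-∫₀ᵗ η(s) ds} I(x(0))` for all `t ≥ 0`. -/
theorem damped_hamiltonian_conformal_invariant_decay
    {N : ℕ}
    (S : (Fin N → ℝ) → Matrix (Fin N) (Fin N) ℝ)
    (hS : ∀ y, (S y)ᵀ = -(S y))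
    (H : (Fin N → ℝ) → ℝ) (gradH : (Fin N → ℝ) → (Fin N → ℝ))
    (hH : ContDiff ℝ 1 H)
    (hgradH : ∀ y w, (fderiv ℝ H y) w = dotProduct (gradH y) w)
    (D : ℝ → Matrix (Fin N) (Fin N) ℝ)
    (x : ℝ → (Fin N → ℝ))
    (hx : ∀ t, HasDerivAt x ((S (x t)).mulVec (gradH (x t)) - (D t).mulVec (x t)) t)
    (I : (Fin N → ℝ) → ℝ) (gradI : (Fin N → ℝ) → (Fin N → ℝ))
    (hI : ContDiff ℝ 1 I)
    (hgradI : ∀ y w, (fderiv ℝ I y) w = dotProduct (gradI y) w)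
    (η : ℝ → ℝ) (hη : Continuous η)
    (hinv : ∀ y, dotProduct (gradI y) ((S y).mulVec (gradH y)) = 0)
    (hdiss : ∀ t y, dotProduct (gradI y) ((D t).mulVec y) = η t * I y) :
    ∀ t, 0 ≤ t → I (x t) = Real.exp (-(∫ s in (0:ℝ)..t, η s)) * I (x 0) := by
  have hIdiff : Differentiable ℝ I := hI.differentiable one_ne_zero
  have hderivI : ∀ t, HasDerivAt (fun t => I (x t)) (-(η t) * I (x t)) t := by
    intro t
    have h1 := (hIdiff (x t)).hasFDerivAt.comp_hasDerivAt t (hx t)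
    have h2 : (fderiv ℝ I (x t)) ((S (x t)).mulVec (gradH (x t)) - (D t).mulVec (x t))
        = -(η t) * I (x t) := by
      rw [hgradI, dotProduct_sub, hinv, hdiss]; ring
    rwa [h2] at h1
  set φ : ℝ → ℝ := fun t => ∫ s in (0:ℝ)..t, η s with hφ
  have hφd : ∀ t, HasDerivAt φ (η t) t := fun t =>
    intervalIntegral.integral_hasDerivAt_right (hη.intervalIntegrable _ _)
      (hη.stronglyMeasurableAtFilter _ _) hη.continuousAt
  have hF : ∀ t, HasDerivAt (fun t => Real.exp (φ t) * I (x t)) 0 t := by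
    intro t
    have h : HasDerivAt (fun t => Real.exp (φ t) * I (x t))
        (Real.exp (φ t) * η t * I (x t) + Real.exp (φ t) * (-(η t) * I (x t))) t :=
      ((hφd t).exp.mul (hderivI t))
    convert h using 1
    ring
  have hconst : ∀ t, Real.exp (φ t) * I (x t) = Real.exp (φ 0) * I (x 0) := by
    intro t
    exact is_const_of_deriv_eq_zero (fun s => (hF s).differentiableAt)
      (fun s => (hF s).deriv) t 0
  intro t _
  have h0 : φ 0 = 0 := intervalIntegral.integral_same
  have hc := hconst t
  rw [h0, Real.exp_zero, one_mul] at hc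
  calc I (x t) = Real.exp (-(φ t)) * (Real.exp (φ t) * I (x t)) := by
        rw [← mul_assoc, ← Real.exp_add]; simp
    _ = Real.exp (-(φ t)) * I (x 0) := by rw [hc]
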